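/- A Boolean monomial dynamical system whose dependency graph is strongly connected with loop number 1 has only fixed points as periodic points; conversely, if its dependency graph is strongly connected with loop number greater than 1, then it has a periodic point that is not a fixed point. -/

import Mathlib

/-- There is a closed directed walk of length `ℓ` through `v₀` in the directed graph
with an edge from `j` to `i` iff `j ∈ S i`. -/
def HasClosedWalk {n : ℕ} (S : Fin n → Finset (Fin n)) (v₀ : Fin n) (ℓ : ℕ) : Prop :=
  ∃ w : ℕ → Fin n, w 0 = v₀ ∧ w ℓ = v₀ ∧ ∀ k < ℓ, w k ∈ S (w (k + 1))

/-- `Wset S t i` is the set of starting points of directed walks of length `t`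
ending at `i`. -/
def Wset {n : ℕ} (S : Fin n → Finset (Fin n)) : ℕ → Fin n → Finset (Fin n)
  | 0, i => {i}
  | t + 1, i => (S i).biUnion (fun k => Wset S t k)

lemma mem_Wset_zero {n} {S : Fin n → Finset (Fin n)} {i j : Fin n} :
    j ∈ Wset S 0 i ↔ j = i := Finset.mem_singleton

lemma mem_Wset_succ {n} {S : Fin n → Finset (Fin n)} {t : ℕ} {i j : Fin n} :
    j ∈ Wset S (t + 1) i ↔ ∃ k ∈ S i, j ∈ Wset S t k := by
  simp [Wset]

lemma mem_Wset_one {n} {S : Fin n → Finset (Fin n)} {i j : Fin n} (h : j ∈ S i) :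
    j ∈ Wset S 1 i := mem_Wset_succ.mpr ⟨j, h, mem_Wset_zero.mpr rfl⟩

lemma Wset_concat {n} {S : Fin n → Finset (Fin n)} {p q : ℕ} {i j k : Fin n}
    (h1 : j ∈ Wset S p k) (h2 : k ∈ Wset S q i) : j ∈ Wset S (p + q) i := by
  induction q generalizing i with
  | zero => rw [mem_Wset_zero] at h2; subst h2; exact h1
  | succ q IH =>
      obtain ⟨m, hm, h2⟩ := mem_Wset_succ.mp h2
      exact mem_Wset_succ.mpr ⟨m, hm, IH h2⟩

lemma refltrans_to_Wset {n} {S : Fin n → Finset (Fin n)} {a b : Fin n}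
    (h : Relation.ReflTransGen (fun j i => j ∈ S i) a b) : ∃ p, a ∈ Wset S p b := by
  induction h with
  | refl => exact ⟨0, mem_Wset_zero.mpr rfl⟩
  | tail h1 h2 IH =>
      obtain ⟨p, hp⟩ := IH
      exact ⟨p + 1, Wset_concat hp (mem_Wset_one h2)⟩

lemma Wset_to_walk {n} {S : Fin n → Finset (Fin n)} {t : ℕ} {i j : Fin n}
    (h : j ∈ Wset S t i) :
    ∃ w : ℕ → Fin n, w 0 = j ∧ w t = i ∧ ∀ k < t, w k ∈ S (w (k + 1)) := by
  induction t generalizing i with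
  | zero => exact ⟨fun _ => j, rfl, mem_Wset_zero.mp h, fun k hk => absurd hk (by omega)⟩
  | succ t IH =>
      obtain ⟨m, hm, h⟩ := mem_Wset_succ.mp h
      obtain ⟨w, hw0, hwt, hws⟩ := IH h
      refine ⟨fun s => if s ≤ t then w s else i, by simp [hw0], by simp, ?_⟩
      intro k hk
      rcases Nat.lt_or_ge k t with h' | h'
      · simpa [Nat.le_of_lt h', Nat.succ_le_of_lt h'] using hws k h'
      · have hkt : k = t := by omega
        subst hkt
        simp [hwt, hm]

lemma walk_to_Wset {n} {S : Fin n → Finset (Fin n)} {t : ℕ} {w : ℕ → Fin n}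
    (h : ∀ k < t, w k ∈ S (w (k + 1))) : w 0 ∈ Wset S t (w t) := by
  induction t with
  | zero => exact mem_Wset_zero.mpr rfl
  | succ t IH =>
      exact mem_Wset_succ.mpr ⟨w t, h t (by omega), IH (fun k hk => h k (by omega))⟩

lemma zero_prop {n} {S : Fin n → Finset (Fin n)} {Φ : (Fin n → ZMod 2) → (Fin n → ZMod 2)}
    (hΦ : ∀ x i, Φ x i = ∏ j ∈ S i, x j) {t : ℕ} {x : Fin n → ZMod 2} {i j : Fin n}
    (hj : j ∈ Wset S t i) (hx : x j = 0) : Φ^[t] x i = 0 := by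
  induction t generalizing i with
  | zero => rw [mem_Wset_zero] at hj; subst hj; exact hx
  | succ t IH =>
      obtain ⟨k, hk, hj⟩ := mem_Wset_succ.mp hj
      rw [Function.iterate_succ_apply', hΦ]
      exact Finset.prod_eq_zero hk (IH hj)

lemma nat_mod_eq_zero_of_dvd {a b : ℕ} (h : a ∣ b) : b % a = 0 := by
  obtain ⟨c, rfl⟩ := h; exact Nat.mul_mod_right a c

theorem boolean_monomial_loop_number_dichotomy {n : ℕ} (hn : 1 ≤ n)
    (S : Fin n → Finset (Fin n))
    (Φ : (Fin n → ZMod 2) → (Fin n → ZMod 2))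
    (hΦ : ∀ x i, Φ x i = ∏ j ∈ S i, x j)
    (hconn : ∀ a b : Fin n, Relation.ReflTransGen (fun j i => j ∈ S i) a b)
    (v₀ : Fin n) (d : ℕ)
    (hd1 : ∀ ℓ, 1 ≤ ℓ → HasClosedWalk S v₀ ℓ → d ∣ ℓ)
    (hd2 : ∀ e : ℕ, (∀ ℓ, 1 ≤ ℓ → HasClosedWalk S v₀ ℓ → e ∣ ℓ) → e ∣ d) :
    (d = 1 → ∀ x t, 1 ≤ t → Φ^[t] x = x → Φ x = x) ∧
    (1 < d → ∃ x t, 1 ≤ t ∧ Φ^[t] x = x ∧ Φ x ≠ x) := by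
  classical
  have hZ2 : ∀ a : ZMod 2, a = 0 ∨ a = 1 := by decide
  have hLd : ∀ m, v₀ ∈ Wset S m v₀ → d ∣ m := by
    intro m hm
    rcases Nat.eq_zero_or_pos m with h | h
    · simp [h]
    · obtain ⟨w, h0, htw, hs⟩ := Wset_to_walk hm
      exact hd1 m h ⟨w, h0, htw, hs⟩
  have hSne : d ≠ 0 → ∀ i, (S i).Nonempty := by
    intro hdne
    have hwalk : ∃ ℓ, 1 ≤ ℓ ∧ HasClosedWalk S v₀ ℓ := by
      by_contra h
      push_neg at h
      have hdd : (d + 1) ∣ d := hd2 (d + 1) (fun ℓ h1 hw => absurd hw (h ℓ h1))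
      have := Nat.le_of_dvd (Nat.pos_of_ne_zero hdne) hdd
      omega
    obtain ⟨ℓ, hℓ, w, hw0, hwl, hws⟩ := hwalk
    intro i
    rcases (hconn v₀ i).cases_tail with h | ⟨c, _, hc⟩
    · subst h
      refine ⟨w (ℓ - 1), ?_⟩
      have := hws (ℓ - 1) (by omega)
      rwa [show ℓ - 1 + 1 = ℓ by omega, hwl] at this
    · exact ⟨c, hc⟩
  have hLadd : ∀ a b, v₀ ∈ Wset S a v₀ → v₀ ∈ Wset S b v₀ → v₀ ∈ Wset S (a + b) v₀ :=
    fun a b ha hb => Wset_concat ha hb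
  have hLsmul : ∀ (k a : ℕ), v₀ ∈ Wset S a v₀ → v₀ ∈ Wset S (k * a) v₀ := by
    intro k a ha
    induction k with
    | zero => rw [Nat.zero_mul]; exact mem_Wset_zero.mpr rfl
    | succ k IH =>
        have := hLadd _ _ IH ha
        rwa [show k * a + a = (k + 1) * a by ring] at this
  constructor
  · -- d = 1 : every periodic point is fixed
    intro hd x t ht hx
    have hSne' := hSne (by omega)
    have haL : ∃ a, 1 ≤ a ∧ v₀ ∈ Wset S a v₀ := by
      obtain ⟨j, hj⟩ := hSne' v₀
      obtain ⟨p, hp⟩ := refltrans_to_Wset (S := S) (hconn v₀ j)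
      exact ⟨p + 1, by omega, Wset_concat hp (mem_Wset_one hj)⟩
    have hex : ∃ g, 0 < g ∧ ∃ a b, v₀ ∈ Wset S a v₀ ∧ v₀ ∈ Wset S b v₀ ∧ a = b + g := by
      obtain ⟨a, ha1, ha⟩ := haL
      exact ⟨a, ha1, a, 0, ha, mem_Wset_zero.mpr rfl, by omega⟩
    obtain ⟨hgpos, a₀, b₀, ha₀, hb₀, hab₀⟩ := Nat.find_spec hex
    have hgdvd : ∀ m, v₀ ∈ Wset S m v₀ → Nat.find hex ∣ m := by
      intro m hm
      by_contra hnd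
      have hr : 0 < m % Nat.find hex :=
        Nat.pos_of_ne_zero (fun h => hnd (Nat.dvd_of_mod_eq_zero h))
      have hmdm : Nat.find hex * (m / Nat.find hex) + m % Nat.find hex = m :=
        Nat.div_add_mod m (Nat.find hex)
      have hqa : (m / Nat.find hex) * a₀
          = (m / Nat.find hex) * b₀ + (m / Nat.find hex) * Nat.find hex := by
        rw [hab₀]; ring
      have hlt : m % Nat.find hex < Nat.find hex := Nat.mod_lt _ hgpos
      have hcomm : Nat.find hex * (m / Nat.find hex)
          = (m / Nat.find hex) * Nat.find hex := Nat.mul_comm _ _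
      exact absurd
        ⟨hr, m + (m / Nat.find hex) * b₀, (m / Nat.find hex) * a₀,
          hLadd _ _ hm (hLsmul _ b₀ hb₀), hLsmul _ a₀ ha₀, by omega⟩
        (Nat.find_min hex hlt)
    have hg1 : Nat.find hex = 1 := by
      have hdvd : Nat.find hex ∣ d := hd2 _ (by
        intro ℓ h1 hw
        obtain ⟨w, hw0, hwl, hws⟩ := hw
        have hmem := walk_to_Wset (S := S) hws
        rw [hw0, hwl] at hmem
        exact hgdvd ℓ hmem)
      rw [hd] at hdvd
      exact Nat.dvd_one.mp hdvd
    rw [hg1] at hab₀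
    have hbig : ∀ m, b₀ * b₀ ≤ m → v₀ ∈ Wset S m v₀ := by
      intro m hmb
      rcases Nat.eq_zero_or_pos b₀ with hb | hb
      · subst hb
        have ha1 : a₀ = 1 := by omega
        have := hLsmul m a₀ ha₀
        rwa [ha1, Nat.mul_one] at this
      · have hdm : b₀ * (m / b₀) + m % b₀ = m := Nat.div_add_mod m b₀
        have hrlt : m % b₀ < b₀ := Nat.mod_lt _ hb
        have hq : b₀ ≤ m / b₀ := (Nat.le_div_iff_mul_le hb).mpr hmb
        have h1 : (m % b₀) * a₀ = (m % b₀) * b₀ + m % b₀ := by rw [hab₀]; ring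
        have h2 : (m / b₀ - m % b₀) * b₀ + (m % b₀) * b₀ = (m / b₀) * b₀ := by
          rw [← Nat.add_mul]; congr 1; omega
        have hsum := hLadd _ _ (hLsmul (m / b₀ - m % b₀) b₀ hb₀) (hLsmul (m % b₀) a₀ ha₀)
        have heq : (m / b₀ - m % b₀) * b₀ + (m % b₀) * a₀ = m := by
          have h3 : b₀ * (m / b₀) = (m / b₀) * b₀ := Nat.mul_comm _ _
          omega
        rwa [heq] at hsum
    rcases Classical.em (∀ i, x i = 1) with hall | hnot
    · funext i
      rw [hΦ, Finset.prod_eq_one (fun j _ => hall j), hall i]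
    · push_neg at hnot
      obtain ⟨i₀, hi₀⟩ := hnot
      have hi₀0 : x i₀ = 0 := (hZ2 (x i₀)).resolve_right hi₀
      have hzero : ∀ i, x i = 0 := by
        intro i
        obtain ⟨p, hp⟩ := refltrans_to_Wset (S := S) (hconn i₀ v₀)
        obtain ⟨q, hq⟩ := refltrans_to_Wset (S := S) (hconn v₀ i)
        have hkt : b₀ * b₀ + p + q ≤ (b₀ * b₀ + p + q + 1) * t := by
          calc b₀ * b₀ + p + q ≤ (b₀ * b₀ + p + q + 1) * 1 := by omega
          _ ≤ (b₀ * b₀ + p + q + 1) * t := Nat.mul_le_mul_left _ ht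
        have hm : v₀ ∈ Wset S ((b₀ * b₀ + p + q + 1) * t - (p + q)) v₀ :=
          hbig _ (by omega)
        have hwalk := Wset_concat (Wset_concat hp hm) hq
        rw [show p + ((b₀ * b₀ + p + q + 1) * t - (p + q)) + q
            = (b₀ * b₀ + p + q + 1) * t by omega] at hwalk
        have hfix : Φ^[(b₀ * b₀ + p + q + 1) * t] x = x := by
          rw [Nat.mul_comm, Function.iterate_mul]
          exact Function.iterate_fixed hx _
        have hz := zero_prop hΦ hwalk hi₀0
        rw [hfix] at hz
        exact hz
      funext i
      obtain ⟨j, hj⟩ := hSne' i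
      rw [hΦ, Finset.prod_eq_zero hj (hzero j), hzero i]
  · -- 1 < d : there is a periodic point that is not fixed
    intro hd
    have hSne' := hSne (by omega)
    have hW : ∀ i, ∃ p, v₀ ∈ Wset S p i := fun i => refltrans_to_Wset (hconn v₀ i)
    set P : Fin n → ℕ := fun i => (hW i).choose with hPdef
    have hP : ∀ i, v₀ ∈ Wset S (P i) i := fun i => (hW i).choose_spec
    have hcong : ∀ i q, v₀ ∈ Wset S q i → P i % d = q % d := by
      intro i q hq
      obtain ⟨r, hr⟩ := refltrans_to_Wset (S := S) (hconn i v₀)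
      have h1 : (P i + r) % d = 0 := nat_mod_eq_zero_of_dvd (hLd _ (Wset_concat (hP i) hr))
      have h2 : (q + r) % d = 0 := nat_mod_eq_zero_of_dvd (hLd _ (Wset_concat hq hr))
      have h3 : P i + r ≡ q + r [MOD d] := h1.trans h2.symm
      exact Nat.ModEq.add_right_cancel' r h3
    set x : Fin n → ZMod 2 := fun i => if P i % d = 0 then 1 else 0 with hxdef
    have hedge : ∀ i j, j ∈ S i → (P j + 1) % d = P i % d := by
      intro i j hj
      exact (hcong i (P j + 1) (Wset_concat (hP j) (mem_Wset_one hj))).symm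
    have key : ∀ k i, Φ^[k] x i = if P i % d = k % d then 1 else 0 := by
      intro k
      induction k with
      | zero => intro i; simp only [Function.iterate_zero, id_eq, Nat.zero_mod]; rfl
      | succ k IH =>
          intro i
          rw [Function.iterate_succ_apply', hΦ]
          by_cases hcase : P i % d = (k + 1) % d
          · rw [if_pos hcase]
            refine Finset.prod_eq_one ?_
            intro j hj
            rw [IH j]
            rw [if_pos (show P j % d = k % d from
              Nat.ModEq.add_right_cancel' 1
                (show P j + 1 ≡ k + 1 [MOD d] from (hedge i j hj).trans hcase))]
          · obtain ⟨j, hj⟩ := hSne' i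
            rw [if_neg hcase]
            refine Finset.prod_eq_zero hj ?_
            have hne2 : ¬ (P j % d = k % d) := by
              intro h6
              exact hcase ((hedge i j hj).symm.trans
                (show (P j + 1) % d = (k + 1) % d from
                  Nat.ModEq.add_right 1 (show P j ≡ k [MOD d] from h6)))
            rw [IH j, if_neg hne2]
    have hPv : P v₀ % d = 0 := by
      have := hcong v₀ 0 (mem_Wset_zero.mpr rfl)
      simpa using this
    refine ⟨x, d, by omega, ?_, ?_⟩
    · funext i
      rw [key d i, Nat.mod_self]
    · intro hfx
      have hne : ¬ (P v₀ % d = 1 % d) := by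
        rw [hPv, Nat.mod_eq_of_lt hd]; omega
      have h1 : Φ x v₀ = 0 := by
        have hk := key 1 v₀
        rw [Function.iterate_one] at hk
        rw [hk, if_neg hne]
      have h2 : x v₀ = 1 := by simp [hxdef, hPv]
      have := congrFun hfx v₀
      rw [h1, h2] at this
      exact zero_ne_one this
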